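/- Let N ≥ 2, α ∈ (0,1), and let q : ZMod N → ℤ with |q_i − q_{i+1}| ≤ 1 for some edge i. Then for every dither value v ∈ (−1/2, 1/2) and every real number c, the D³sync update at edge i with dither v satisfies Σ_j ((q'_j : ℝ) − c)² = Σ_j ((q_j : ℝ) − c)². (When the active nodes' values differ by at most one slot, the interaction leaves the Lyapunov function V unchanged.) -/

import Mathlib

open MeasureTheory

/-- Nearest-integer rounding: `round y = ⌊y + 1/2⌋`. -/
noncomputable def nround (y : ℝ) : ℤ := ⌊y + 1/2⌋

/-- The D³sync update at edge `i` of the cyclic vector `q` with dither `v`: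
`q'_i = q_{i+1} + round((1+α)/2 · (q_i − q_{i+1}) + v)`,
`q'_{i+1} = q_i + q_{i+1} − q'_i`, and `q'_j = q_j` elsewhere. -/
noncomputable def d3update (N : ℕ) (α : ℝ) (q : ZMod N → ℤ) (i : ZMod N) (v : ℝ) :
    ZMod N → ℤ := fun j =>
  if j = i then
    q (i + 1) + nround ((1 + α) / 2 * ((q i : ℝ) - (q (i + 1) : ℝ)) + v)
  else if j = i + 1 then
    q i + q (i + 1) -
      (q (i + 1) + nround ((1 + α) / 2 * ((q i : ℝ) - (q (i + 1) : ℝ)) + v))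
  else q j

/-- A TDM state: all pairwise differences are at most one slot. -/
def isTDM (N : ℕ) (q : ZMod N → ℤ) : Prop := ∀ i j : ZMod N, |q i - q j| ≤ 1

/-- When the active nodes' values differ by at most one slot, the D³sync interaction
leaves the Lyapunov function `V(q) = Σ_j (q_j − c)²` unchanged. -/
theorem stmt11 (N : ℕ) [NeZero N] (hN : 2 ≤ N) (α : ℝ) (hα : α ∈ Set.Ioo (0 : ℝ) 1)
    (q : ZMod N → ℤ) (i : ZMod N) (hdiff : |q i - q (i + 1)| ≤ 1) (v : ℝ)
    (hv : v ∈ Set.Ioo (-(1 : ℝ) / 2) (1 / 2)) (c : ℝ) :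
    ∑ j : ZMod N, ((d3update N α q i v j : ℝ) - c) ^ 2 =
      ∑ j : ZMod N, ((q j : ℝ) - c) ^ 2 := by
  obtain ⟨hα0, hα1⟩ := hα
  obtain ⟨hv0, hv1⟩ := hv
  haveI : Fact (1 < N) := ⟨hN⟩
  have hne : i ≠ i + 1 := by
    intro h
    exact one_ne_zero (left_eq_add.mp h)
  set a := q i with ha
  set b := q (i + 1) with hb
  set x : ℝ := (1 + α) / 2 * ((a : ℝ) - (b : ℝ)) + v with hx
  set r : ℤ := nround x with hrdef
  -- r = 0 or r = a - b
  have hr : r = 0 ∨ r = a - b := by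
    rw [abs_le] at hdiff
    have hd : a - b = -1 ∨ a - b = 0 ∨ a - b = 1 := by omega
    have hab : (a : ℝ) - (b : ℝ) = ((a - b : ℤ) : ℝ) := by push_cast; ring
    rcases hd with hd | hd | hd
    · have hx1 : x = (1 + α) / 2 * (-1) + v := by rw [hx, hab, hd]; norm_num
      have h1 : r = -1 ∨ r = 0 := by
        have hlo : (-1 : ℤ) ≤ r := by
          rw [hrdef]; unfold nround
          apply Int.le_floor.mpr
          push_cast
          rw [hx1]; linarith
        have hhi : r < 1 := by
          rw [hrdef]; unfold nround
          have : ⌊x + 1/2⌋ < (1 : ℤ) := by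
            apply Int.floor_lt.mpr
            push_cast
            rw [hx1]; linarith
          exact this
        omega
      omega
    · left
      have hx1 : x = v := by rw [hx, hab, hd]; norm_num
      rw [hrdef]; unfold nround
      rw [hx1]
      apply Int.floor_eq_zero_iff.mpr
      constructor <;> simp <;> linarith
    · have hx1 : x = (1 + α) / 2 + v := by rw [hx, hab, hd]; norm_num
      have h1 : r = 0 ∨ r = 1 := by
        have hlo : (0 : ℤ) ≤ r := by
          rw [hrdef]; unfold nround
          apply Int.le_floor.mpr
          push_cast
          rw [hx1]; linarith
        have hhi : r < 2 := by
          rw [hrdef]; unfold nround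
          have : ⌊x + 1/2⌋ < (2 : ℤ) := by
            apply Int.floor_lt.mpr
            push_cast
            rw [hx1]; linarith
          exact this
        omega
      rcases h1 with h | h
      · left; exact h
      · right; rw [h, ← hd]
  -- values of the update
  have hui : d3update N α q i v i = b + r := by
    simp [d3update, hx]
    rfl
  have hui1 : d3update N α q i v (i + 1) = a - r := by
    simp only [d3update]
    rw [if_neg (Ne.symm hne)]; rw [if_true]
    show a + b - (b + r) = a - r
    ring
  have huj : ∀ j, j ≠ i → j ≠ i + 1 → d3update N α q i v j = q j := by
    intro j h1 h2
    simp [d3update, h1, h2]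
  -- split the sums
  have hsub : ({i, i + 1} : Finset (ZMod N)) ⊆ Finset.univ := Finset.subset_univ _
  rw [← Finset.sum_sdiff hsub, ← Finset.sum_sdiff hsub]
  congr 1
  · apply Finset.sum_congr rfl
    intro j hj
    simp only [Finset.mem_sdiff, Finset.mem_insert, Finset.mem_singleton] at hj
    push_neg at hj
    rw [huj j hj.2.1 hj.2.2]
  · rw [Finset.sum_pair hne, Finset.sum_pair hne, hui, hui1]
    rcases hr with hr | hr
    · rw [hr]; push_cast; ring
    · rw [hr]; push_cast; ring
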